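/- There is an absolute constant C such that for all real R ≥ 1, |∑_{n ≤ R} (1/n²)·log(1 + n²/R²) − (π/2 − log 2)/R| ≤ C/R², the sum over positive integers n ≤ R. -/

import Mathlib

open Real MeasureTheory Set

noncomputable def gg (t : ℝ) : ℝ := Real.log (1 + t ^ 2) / t ^ 2

lemma one_add_sq_pos (t : ℝ) : (0:ℝ) < 1 + t ^ 2 := by positivity

lemma gg_nonneg (t : ℝ) : 0 ≤ gg t :=
  div_nonneg (Real.log_nonneg (by nlinarith [sq_nonneg t])) (sq_nonneg t)

lemma log_one_add_sq_le (t : ℝ) : Real.log (1 + t ^ 2) ≤ t ^ 2 := by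
  have := Real.log_le_sub_one_of_pos (one_add_sq_pos t); linarith

lemma gg_le_one (t : ℝ) : gg t ≤ 1 := by
  unfold gg
  rcases eq_or_ne t 0 with h | h
  · simp [h]
  · rw [div_le_one (by positivity)]; exact log_one_add_sq_le t

lemma key_log_ge (t : ℝ) : 1 - 1 / (1 + t ^ 2) ≤ Real.log (1 + t ^ 2) := by
  have h := Real.log_le_sub_one_of_pos (x := 1 / (1 + t ^ 2)) (by positivity)
  rw [one_div, Real.log_inv] at h
  rw [one_div]
  linarith

lemma hasDerivAt_gg {t : ℝ} (ht : t ≠ 0) :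
    HasDerivAt gg ((2 * t / (1 + t ^ 2) * t ^ 2 - Real.log (1 + t ^ 2) * (2 * t)) / (t ^ 2) ^ 2)
      t := by
  have h1 : HasDerivAt (fun x : ℝ => 1 + x ^ 2) (2 * t) t := by
    simpa using (hasDerivAt_pow 2 t).const_add 1
  have h2 : HasDerivAt (fun x : ℝ => Real.log (1 + x ^ 2)) (2 * t / (1 + t ^ 2)) t :=
    h1.log (ne_of_gt (one_add_sq_pos t))
  have h3 : HasDerivAt (fun x : ℝ => x ^ 2) (2 * t) t := by simpa using hasDerivAt_pow 2 t
  have := h2.div h3 (pow_ne_zero 2 ht)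
  exact this

lemma gg_anti {a b : ℝ} (ha : 0 < a) (hab : a ≤ b) : gg b ≤ gg a := by
  have hA : AntitoneOn gg (Icc a b) := by
    apply antitoneOn_of_deriv_nonpos (convex_Icc a b)
    · intro t ht
      have ht0 : t ≠ 0 := ne_of_gt (lt_of_lt_of_le ha ht.1)
      exact (hasDerivAt_gg ht0).continuousAt.continuousWithinAt
    · intro t ht
      rw [interior_Icc] at ht
      have ht0 : t ≠ 0 := ne_of_gt (lt_trans ha ht.1)
      exact (hasDerivAt_gg ht0).differentiableAt.differentiableWithinAt
    · intro t ht
      rw [interior_Icc] at ht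
      have ht0 : 0 < t := lt_trans ha ht.1
      rw [(hasDerivAt_gg (ne_of_gt ht0)).deriv]
      apply div_nonpos_of_nonpos_of_nonneg _ (by positivity)
      have h := key_log_ge t
      have hpos := one_add_sq_pos t
      have he : 2 * t / (1 + t ^ 2) * t ^ 2 = 2 * t - 2 * t / (1 + t ^ 2) := by
        field_simp; ring
      rw [he]
      have h2 : 2 * t * (1 - 1 / (1 + t ^ 2)) ≤ 2 * t * Real.log (1 + t ^ 2) :=
        mul_le_mul_of_nonneg_left h (by positivity)
      have h3 : 2 * t * (1 - 1 / (1 + t ^ 2)) = 2 * t - 2 * t * (1 / (1 + t ^ 2)) := by ring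
      rw [h3] at h2
      have : 2 * t / (1 + t ^ 2) = 2 * t * (1 / (1 + t ^ 2)) := by ring
      linarith [this ▸ h2]
  exact hA (left_mem_Icc.mpr hab) (right_mem_Icc.mpr hab) hab

lemma gg_measurable : Measurable gg :=
  (Real.measurable_log.comp (measurable_const.add (measurable_id.pow_const 2))).div
    (measurable_id.pow_const 2)

lemma gg_comp_intble (R a b : ℝ) : IntervalIntegrable (fun x => gg (x / R)) volume a b := by
  rw [intervalIntegrable_iff]
  apply Measure.integrableOn_of_bounded (M := 1) measure_Ioc_lt_top.ne
  · exact (gg_measurable.comp (measurable_id.div_const R)).aestronglyMeasurable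
  · filter_upwards with x
    rw [Real.norm_eq_abs, abs_of_nonneg (gg_nonneg _)]
    exact gg_le_one _

lemma gg_intble (a b : ℝ) : IntervalIntegrable gg volume a b := by
  have := gg_comp_intble 1 a b
  simpa using this

noncomputable def FF (t : ℝ) : ℝ := 2 * Real.arctan t - Real.log (1 + t ^ 2) / t

lemma abs_log_div_le (t : ℝ) : |Real.log (1 + t ^ 2) / t| ≤ |t| := by
  rcases eq_or_ne t 0 with h | h
  · simp [h]
  · rw [abs_div, div_le_iff₀ (abs_pos.mpr h),
      abs_of_nonneg (Real.log_nonneg (by nlinarith [sq_nonneg t]))]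
    calc Real.log (1 + t ^ 2) ≤ t ^ 2 := log_one_add_sq_le t
      _ = |t| * |t| := by rw [pow_two, ← abs_mul_abs_self]

lemma FF_contOn : ContinuousOn FF (Icc 0 1) := by
  intro t ht
  rcases eq_or_ne t 0 with h | h
  · subst h
    have h1 : Filter.Tendsto (fun t : ℝ => Real.log (1 + t ^ 2) / t)
        (nhdsWithin 0 (Icc 0 1)) (nhds 0) := by
      have hb : ∀ n : ℝ, ‖Real.log (1 + n ^ 2) / n‖ ≤ |n| := fun n => by
        rw [Real.norm_eq_abs]; exact abs_log_div_le n
      have h2 : Filter.Tendsto (fun t : ℝ => |t|) (nhds (0:ℝ)) (nhds 0) := by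
        simpa using continuous_abs.tendsto (0:ℝ)
      exact squeeze_zero_norm hb (h2.mono_left nhdsWithin_le_nhds)
    have h2 : Filter.Tendsto (fun t : ℝ => 2 * Real.arctan t)
        (nhdsWithin 0 (Icc 0 1)) (nhds 0) := by
      have h3 : Filter.Tendsto (fun t : ℝ => 2 * Real.arctan t) (nhds (0:ℝ))
          (nhds (2 * Real.arctan 0)) :=
        (Real.continuous_arctan.const_smul (2:ℝ)).tendsto 0
      simpa using h3.mono_left nhdsWithin_le_nhds
    have hF0 : FF 0 = 0 := by simp [FF]
    unfold ContinuousWithinAt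
    rw [hF0]
    rw [show FF = fun x => 2 * Real.arctan x - Real.log (1 + x ^ 2) / x from funext fun x => rfl]
    simpa only [sub_zero] using h2.sub h1
  · apply ContinuousAt.continuousWithinAt
    have hlog : ContinuousAt (fun t : ℝ => Real.log (1 + t ^ 2)) t :=
      ContinuousAt.log (by fun_prop) (ne_of_gt (one_add_sq_pos t))
    exact ((Real.continuous_arctan.continuousAt.const_smul (2:ℝ)).sub
      (hlog.div continuousAt_id h))

lemma FF_deriv {t : ℝ} (ht : t ≠ 0) : HasDerivAt FF (gg t) t := by
  have h1 : HasDerivAt (fun x : ℝ => 1 + x ^ 2) (2 * t) t := by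
    simpa using (hasDerivAt_pow 2 t).const_add 1
  have h2 : HasDerivAt (fun x : ℝ => Real.log (1 + x ^ 2)) (2 * t / (1 + t ^ 2)) t :=
    h1.log (ne_of_gt (one_add_sq_pos t))
  have h3 := h2.div (hasDerivAt_id t) ht
  have h4 := (Real.hasDerivAt_arctan t).const_mul 2
  have h5 := h4.sub h3
  refine h5.congr_deriv ?_
  have h6 : (1:ℝ) + t ^ 2 ≠ 0 := ne_of_gt (one_add_sq_pos t)
  unfold gg
  simp only [id]
  field_simp
  ring

lemma integral_gg : ∫ t in (0:ℝ)..1, gg t = Real.pi / 2 - Real.log 2 := by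
  have h := intervalIntegral.integral_eq_sub_of_hasDeriv_right_of_le (f := FF) (f' := gg)
    zero_le_one FF_contOn
    (fun x hx => (FF_deriv (ne_of_gt hx.1)).hasDerivWithinAt) (gg_intble 0 1)
  rw [h]
  have : (1:ℝ) + 1 ^ 2 = 2 := by norm_num
  simp [FF, Real.arctan_one, this]
  ring

lemma int_le_const {R a b : ℝ} (hR : 0 < R) (ha : 0 < a) (hab : a ≤ b) :
    ∫ x in a..b, gg (x / R) ≤ (b - a) * gg (a / R) := by
  have h := intervalIntegral.integral_mono_on (f := fun x => gg (x / R))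
    (g := fun _ => gg (a / R)) hab (gg_comp_intble R a b) intervalIntegrable_const
    (fun x hx => gg_anti (div_pos ha hR) (by gcongr; exact hx.1))
  simpa [smul_eq_mul, mul_comm] using h

lemma int_ge_const {R a b : ℝ} (hR : 0 < R) (ha : 0 < a) (hab : a ≤ b) :
    (b - a) * gg (b / R) ≤ ∫ x in a..b, gg (x / R) := by
  have h := intervalIntegral.integral_mono_on (f := fun _ => gg (b / R))
    (g := fun x => gg (x / R)) hab intervalIntegrable_const (gg_comp_intble R a b)
    (fun x hx => gg_anti (div_pos (lt_of_lt_of_le ha hx.1) hR) (by gcongr; exact hx.2))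
  simpa [smul_eq_mul, mul_comm] using h

lemma int_le_len {R a b : ℝ} (hab : a ≤ b) :
    ∫ x in a..b, gg (x / R) ≤ (b - a) := by
  have h := intervalIntegral.integral_mono_on (f := fun x => gg (x / R))
    (g := fun _ => (1:ℝ)) hab (gg_comp_intble R a b) intervalIntegrable_const
    (fun x _ => gg_le_one _)
  simpa [smul_eq_mul] using h

lemma int_nonneg {R a b : ℝ} (hab : a ≤ b) :
    0 ≤ ∫ x in a..b, gg (x / R) :=
  intervalIntegral.integral_nonneg hab (fun x _ => gg_nonneg _)

lemma upper_bound {R : ℝ} (hR : 0 < R) (N : ℕ) (hN : 1 ≤ N) :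
    ∑ n ∈ Finset.Icc 1 N, gg (n / R) ≤ 1 + ∫ x in (1:ℝ)..(N:ℝ), gg (x / R) := by
  induction N with
  | zero => omega
  | succ m ih =>
    rcases Nat.lt_or_ge 1 (m + 1) with h | h
    · have hm : 1 ≤ m := by omega
      have hsum : ∑ n ∈ Finset.Icc 1 (m + 1), gg (n / R)
          = (∑ n ∈ Finset.Icc 1 m, gg (n / R)) + gg ((m + 1 : ℕ) / R) :=
        Finset.sum_Icc_succ_top (by omega) _
      have hint : (∫ x in (1:ℝ)..((m:ℝ) + 1), gg (x / R))
          = (∫ x in (1:ℝ)..(m:ℝ), gg (x / R)) + ∫ x in (m:ℝ)..((m:ℝ) + 1), gg (x / R) :=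
        (intervalIntegral.integral_add_adjacent_intervals (gg_comp_intble R _ _)
          (gg_comp_intble R _ _)).symm
      have hm' : (0:ℝ) < (m:ℝ) := by exact_mod_cast hm
      have hstep := int_ge_const hR (a := (m:ℝ)) (b := (m:ℝ) + 1) hm' (by linarith)
      rw [show ((m:ℝ) + 1 - (m:ℝ)) = 1 by ring, one_mul] at hstep
      have hcast : ((m + 1 : ℕ) : ℝ) = (m:ℝ) + 1 := by push_cast; ring
      rw [hsum, hcast, hint]
      linarith [ih hm]
    · have hm0 : m = 0 := by omega
      subst hm0
      norm_num [intervalIntegral.integral_same]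
      linarith [gg_le_one (R⁻¹)]

lemma lower_bound {R : ℝ} (hR : 0 < R) (N : ℕ) (hN : 1 ≤ N) :
    (∫ x in (0:ℝ)..(N:ℝ), gg (x / R))
      ≤ (∑ n ∈ Finset.Icc 1 N, gg (n / R)) + 2 - gg (N / R) := by
  induction N with
  | zero => omega
  | succ m ih =>
    rcases Nat.lt_or_ge 1 (m + 1) with h | h
    · have hm : 1 ≤ m := by omega
      have hsum : ∑ n ∈ Finset.Icc 1 (m + 1), gg (n / R)
          = (∑ n ∈ Finset.Icc 1 m, gg (n / R)) + gg ((m + 1 : ℕ) / R) :=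
        Finset.sum_Icc_succ_top (by omega) _
      have hint : (∫ x in (0:ℝ)..((m:ℝ) + 1), gg (x / R))
          = (∫ x in (0:ℝ)..(m:ℝ), gg (x / R)) + ∫ x in (m:ℝ)..((m:ℝ) + 1), gg (x / R) :=
        (intervalIntegral.integral_add_adjacent_intervals (gg_comp_intble R _ _)
          (gg_comp_intble R _ _)).symm
      have hm' : (0:ℝ) < (m:ℝ) := by exact_mod_cast hm
      have hstep := int_le_const hR (a := (m:ℝ)) (b := (m:ℝ) + 1) hm' (by linarith)
      rw [show ((m:ℝ) + 1 - (m:ℝ)) = 1 by ring, one_mul] at hstep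
      have hcast : ((m + 1 : ℕ) : ℝ) = (m:ℝ) + 1 := by push_cast; ring
      rw [hsum, hcast, hint]
      linarith [ih hm]
    · have hm0 : m = 0 := by omega
      subst hm0
      have h1 := int_le_len (R := R) (a := 0) (b := 1) zero_le_one
      norm_num
      linarith

theorem sum_o_asymp :
    ∃ C : ℝ, 0 < C ∧ ∀ R : ℝ, 1 ≤ R →
      |(∑ n ∈ Finset.Icc 1 ⌊R⌋₊, (1 / (n : ℝ) ^ 2) * Real.log (1 + n ^ 2 / R ^ 2)) -
          (Real.pi / 2 - Real.log 2) / R| ≤ C / R ^ 2 := by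
  refine ⟨3, by norm_num, ?_⟩
  intro R hR
  have hR0 : (0:ℝ) < R := by linarith
  set N := ⌊R⌋₊ with hNdef
  have hN1 : 1 ≤ N := Nat.le_floor (by exact_mod_cast hR)
  have hNR : (N:ℝ) ≤ R := Nat.floor_le (by linarith)
  have hRN : R < (N:ℝ) + 1 := Nat.lt_floor_add_one R
  have hRI : (∫ x in (0:ℝ)..R, gg (x / R)) = R * (Real.pi / 2 - Real.log 2) := by
    rw [intervalIntegral.integral_comp_div (f := gg) (ne_of_gt hR0), zero_div,
      div_self (ne_of_gt hR0), integral_gg, smul_eq_mul]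
  have hsplitN : (∫ x in (0:ℝ)..R, gg (x / R))
      = (∫ x in (0:ℝ)..(N:ℝ), gg (x / R)) + ∫ x in (N:ℝ)..R, gg (x / R) :=
    (intervalIntegral.integral_add_adjacent_intervals (gg_comp_intble R _ _)
      (gg_comp_intble R _ _)).symm
  have hsplit1 : (∫ x in (0:ℝ)..(N:ℝ), gg (x / R))
      = (∫ x in (0:ℝ)..1, gg (x / R)) + ∫ x in (1:ℝ)..(N:ℝ), gg (x / R) :=
    (intervalIntegral.integral_add_adjacent_intervals (gg_comp_intble R _ _)
      (gg_comp_intble R _ _)).symm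
  have htail_le : (∫ x in (N:ℝ)..R, gg (x / R)) ≤ 1 :=
    le_trans (int_le_len hNR) (by linarith)
  have htail_ge : 0 ≤ ∫ x in (N:ℝ)..R, gg (x / R) := int_nonneg hNR
  have hhead_ge : 0 ≤ ∫ x in (0:ℝ)..1, gg (x / R) := int_nonneg zero_le_one
  have hub := upper_bound hR0 N hN1
  have hlb := lower_bound hR0 N hN1
  have hggN := gg_nonneg ((N:ℝ) / R)
  have hkey : |(∑ n ∈ Finset.Icc 1 N, gg (n / R)) - R * (Real.pi / 2 - Real.log 2)| ≤ 3 := by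
    rw [abs_le]
    constructor
    · linarith
    · linarith
  have hsum_eq : (∑ n ∈ Finset.Icc 1 N, (1 / (n : ℝ) ^ 2) * Real.log (1 + n ^ 2 / R ^ 2))
      = (∑ n ∈ Finset.Icc 1 N, gg (n / R)) / R ^ 2 := by
    rw [Finset.sum_div]
    apply Finset.sum_congr rfl
    intro n hn
    have hn1 : 1 ≤ n := (Finset.mem_Icc.mp hn).1
    have hnne : ((n:ℝ)) ≠ 0 := by
      have : (0:ℝ) < (n:ℝ) := by exact_mod_cast hn1
      exact ne_of_gt this
    unfold gg
    rw [div_pow]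
    field_simp
  rw [hsum_eq]
  have heq : (∑ n ∈ Finset.Icc 1 N, gg (n / R)) / R ^ 2 - (Real.pi / 2 - Real.log 2) / R
      = ((∑ n ∈ Finset.Icc 1 N, gg (n / R)) - R * (Real.pi / 2 - Real.log 2)) / R ^ 2 := by
    field_simp
  rw [heq, abs_div, abs_of_pos (by positivity : (0:ℝ) < R ^ 2)]
  gcongr
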